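/- For every prime p > 2 and every n ≥ 1, the symmetric multiaction on F_p^n is not a monoidal network. Concretely: if n > 1, let M = (F_p^n)^× ∪ {0}; then there is no proper nonzero ideal I of F_p^n with an extended submonoid M̂ ⊆ M satisfying M \ M̂ ⊆ I and the lifting property that every bijection of π(M̂) lifts along the projection π : F_p^n → F_p^n/I to a bijection of F_p^n stabilizing M̂. The key counting fact: if every permutation of π(M) lifts, then all fibers π^{-1}(a) ∩ M (a ∈ π(M)) have equal cardinality, which forces (p−1)^n + 1 = (p−1)^m + 1 where F_p^n/I ≅ F_p^m with m < n, hence p = 2. -/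

import Mathlib

lemma swap_image_self {α : Type*} [DecidableEq α] {S : Set α} {a b : α}
    (ha : a ∈ S) (hb : b ∈ S) : ⇑(Equiv.swap a b) '' S = S := by
  have key : ∀ y ∈ S, Equiv.swap a b y ∈ S := by
    intro y hy
    rcases eq_or_ne y a with rfl | hya
    · simpa [Equiv.swap_apply_left] using hb
    rcases eq_or_ne y b with rfl | hyb
    · simpa [Equiv.swap_apply_right] using ha
    · simpa [Equiv.swap_apply_of_ne_of_ne hya hyb] using hy
  apply Set.Subset.antisymm
  · rintro x ⟨y, hy, rfl⟩; exact key y hy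
  · intro y hy
    exact ⟨Equiv.swap a b y, key y hy, by simp⟩

/-- For a prime `p > 2` and `n > 1`, the extended submonoid `M = (𝔽ₚⁿ)ˣ ∪ {0}` has no
proper nonzero covering ideal under the symmetric multiaction: there is no proper nonzero
ideal `I` together with an extended submonoid `M̂ ⊆ M` with `M \ M̂ ⊆ I` such that every
permutation of `𝔽ₚⁿ/I` stabilizing `π(M̂)` lifts along `π` to a permutation of `𝔽ₚⁿ`
stabilizing `M̂`.  In particular `Γ^sym (𝔽ₚⁿ)` is not a monoidal network. -/
theorem stmt7 (p : ℕ) [Fact p.Prime] (hp : 2 < p) (n : ℕ) (hn : 1 < n) :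
    ¬ ∃ (I : Ideal (Fin n → ZMod p)) (Mhat : Submonoid (Fin n → ZMod p)),
        I ≠ ⊥ ∧ I ≠ ⊤ ∧
        (∀ c : ZMod p, (fun _ => c : Fin n → ZMod p) ∈ Mhat) ∧
        (Mhat : Set (Fin n → ZMod p)) ⊆ {x | IsUnit x} ∪ {0} ∧
        (∀ x ∈ ({x | IsUnit x} ∪ {0} : Set (Fin n → ZMod p)) \ Mhat, x ∈ I) ∧
        (∀ g : Equiv.Perm ((Fin n → ZMod p) ⧸ I),
          ⇑g '' (Ideal.Quotient.mk I '' (Mhat : Set (Fin n → ZMod p)))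
              = Ideal.Quotient.mk I '' (Mhat : Set (Fin n → ZMod p)) →
          ∃ g' : Equiv.Perm (Fin n → ZMod p),
            ⇑g' '' (Mhat : Set (Fin n → ZMod p)) = (Mhat : Set (Fin n → ZMod p)) ∧
            ∀ x ∈ Mhat, Ideal.Quotient.mk I (g' x) = g (Ideal.Quotient.mk I x)) := by
  classical
  rintro ⟨I, Mhat, hIbot, hItop, hconst, hMsub, hcov, hlift⟩
  have h2 : (2 : ZMod p) ≠ 0 := by
    have : ((2 : ℕ) : ZMod p) ≠ 0 := by
      rw [Ne, ZMod.natCast_eq_zero_iff]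
      exact fun h => absurd (Nat.le_of_dvd (by norm_num) h) (not_le_of_gt hp)
    simpa using this
  have h1 : (1 : ZMod p) ≠ 0 := one_ne_zero
  -- find y ∈ I, y ≠ 0
  obtain ⟨y, hyI, hy0⟩ : ∃ y ∈ I, y ≠ 0 := by
    by_contra h
    push_neg at h
    exact hIbot (le_antisymm (fun z hz => h z hz) bot_le)
  obtain ⟨j, hj⟩ : ∃ j, y j ≠ 0 := by
    by_contra h; push_neg at h; exact hy0 (funext h)
  -- z = Pi.single j 1 ∈ I
  set z : Fin n → ZMod p := Pi.single j 1 with hz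
  have hzI : z ∈ I := by
    have : (Pi.single j (y j)⁻¹ : Fin n → ZMod p) * y ∈ I := I.mul_mem_left _ hyI
    convert this using 1
    funext i
    by_cases hij : i = j
    · subst hij
      simp [hz, Pi.single_eq_same, inv_mul_cancel₀ hj]
    · simp [hz, Pi.single_eq_of_ne hij]
  -- x = 1 + z
  set x : Fin n → ZMod p := 1 + z with hxdef
  have hxcoord : ∀ i, x i ≠ 0 := by
    intro i
    by_cases hij : i = j
    · subst hij
      have hx2 : x i = 1 + 1 := by
        simp only [hxdef, hz, Pi.add_apply, Pi.one_apply, Pi.single_eq_same]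
      rw [hx2]
      intro h
      exact h2 (by rw [← h]; norm_num)
    · have hx1 : x i = 1 := by
        simp only [hxdef, hz, Pi.add_apply, Pi.one_apply, Pi.single_eq_of_ne hij, add_zero]
      rw [hx1]; exact h1
  have hxunit : IsUnit x := by
    refine IsUnit.of_mul_eq_one (a := x) (fun i => (x i)⁻¹) (funext fun i => ?_)
    exact mul_inv_cancel₀ (hxcoord i)
  have hxne1 : x ≠ 1 := by
    intro h
    have h' := congrFun h j
    simp only [hxdef, hz, Pi.add_apply, Pi.one_apply, Pi.single_eq_same,
      add_eq_left] at h'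
    exact h1 h'
  -- membership
  have h1M : (1 : Fin n → ZMod p) ∈ Mhat := by
    have := hconst 1
    simpa using this
  have h0M : (0 : Fin n → ZMod p) ∈ Mhat := by
    have := hconst 0
    exact this
  have hxM : x ∈ Mhat := by
    by_contra hxM
    have : x ∈ I := hcov x ⟨Or.inl hxunit, hxM⟩
    exact hItop (I.eq_top_of_isUnit_mem this hxunit)
  -- 1 ∉ I
  have h1I : (1 : Fin n → ZMod p) ∉ I := fun h => hItop ((Ideal.eq_top_iff_one I).mpr h)
  have hmk1 : Ideal.Quotient.mk I (1 : Fin n → ZMod p) ≠ 0 := by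
    rw [Ne, Ideal.Quotient.eq_zero_iff_mem]; exact h1I
  have hmkx : Ideal.Quotient.mk I x = Ideal.Quotient.mk I 1 := by
    rw [Ideal.Quotient.eq]
    simpa [hxdef] using hzI
  -- the swap
  set a := Ideal.Quotient.mk I (1 : Fin n → ZMod p) with ha
  have haS : a ∈ Ideal.Quotient.mk I '' (Mhat : Set (Fin n → ZMod p)) := ⟨1, h1M, rfl⟩
  have h0S : (0 : (Fin n → ZMod p) ⧸ I) ∈ Ideal.Quotient.mk I '' (Mhat : Set (Fin n → ZMod p)) :=
    ⟨0, h0M, by simp⟩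
  obtain ⟨g', hg'img, hg'comm⟩ := hlift (Equiv.swap a 0) (swap_image_self haS h0S)
  -- g' sends 1 and x to elements of I ∩ Mhat, hence to 0
  have key : ∀ w ∈ Mhat, Ideal.Quotient.mk I w = a → g' w = 0 := by
    intro w hwM hw
    have h1 : Ideal.Quotient.mk I (g' w) = 0 := by
      rw [hg'comm w hwM, hw, Equiv.swap_apply_left]
    have h2 : g' w ∈ I := (Ideal.Quotient.eq_zero_iff_mem).mp h1
    have h3 : g' w ∈ (Mhat : Set (Fin n → ZMod p)) := by
      rw [← hg'img]; exact ⟨w, hwM, rfl⟩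
    rcases hMsub h3 with h4 | h4
    · exact absurd (I.eq_top_of_isUnit_mem h2 h4) hItop
    · exact h4
  have e1 : g' (1 : Fin n → ZMod p) = 0 := key 1 h1M rfl
  have e2 : g' x = 0 := key x hxM hmkx
  exact hxne1 (g'.injective (e2.trans e1.symm))
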